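/- arXiv:2111.12534 — 8 statements merged into one kernel-verified Lean document; each statement's English description precedes it below -/
import Mathlib

section
/- If x, y, z are elements of a finite group G such that each of the subgroups ⟨x,y⟩, ⟨x,z⟩, ⟨y,z⟩ is cyclic, then ⟨x,y,z⟩ is cyclic. -/
open Subgroup

-- elements of a cyclic closure commute
theorem commute_of_cyclic' {G : Type*} [Group G] {x y : G}
    (h : IsCyclic ↥(Subgroup.closure ({x, y} : Set G))) : Commute x y := by
  obtain ⟨t, ht⟩ := h.exists_generator
  have hx : x ∈ Subgroup.closure ({x, y} : Set G) := subset_closure (by simp)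
  have hy : y ∈ Subgroup.closure ({x, y} : Set G) := subset_closure (by simp)
  obtain ⟨m, hm⟩ := ht ⟨x, hx⟩
  obtain ⟨n, hn⟩ := ht ⟨y, hy⟩
  have hmx : (t : G) ^ m = x := congrArg Subtype.val hm
  have hny : (t : G) ^ n = y := congrArg Subtype.val hn
  have h2 := Commute.zpow_zpow_self (t : G) m n
  rwa [hmx, hny] at h2

theorem card_closure_pair' {G : Type*} [Group G] [Finite G] {x y : G}
    (h : IsCyclic ↥(Subgroup.closure ({x, y} : Set G))) :
    Nat.card ↥(Subgroup.closure ({x, y} : Set G)) = Nat.lcm (orderOf x) (orderOf y) := by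
  set S := Subgroup.closure ({x, y} : Set G) with hS
  obtain ⟨t, ht⟩ := h.exists_generator
  have hx : x ∈ S := subset_closure (by simp)
  have hy : y ∈ S := subset_closure (by simp)
  have hcard : orderOf t = Nat.card S := orderOf_eq_card_of_forall_mem_zpowers ht
  have hz : ∀ g ∈ S, ∃ k : ℤ, g = (t : G) ^ k := by
    intro g hg
    obtain ⟨k, hk⟩ := ht ⟨g, hg⟩
    exact ⟨k, (congrArg Subtype.val hk).symm⟩
  set n : ℕ := Nat.lcm (orderOf x) (orderOf y) with hn
  have hpow : ∀ g ∈ S, g ^ n = 1 := by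
    intro g hg
    induction hg using Subgroup.closure_induction with
    | mem g hg =>
      rcases hg with rfl | rfl
      · exact orderOf_dvd_iff_pow_eq_one.mp (Nat.dvd_lcm_left _ _)
      · exact orderOf_dvd_iff_pow_eq_one.mp (Nat.dvd_lcm_right _ _)
    | one => exact one_pow n
    | mul g g' hg hg' pg pg' =>
      obtain ⟨k, rfl⟩ := hz g hg
      obtain ⟨k', rfl⟩ := hz g' hg'
      rw [(Commute.zpow_zpow_self (t : G) k k').mul_pow, pg, pg', one_mul]
    | inv g hg pg => rw [inv_pow, pg, inv_one]
  have h1 : orderOf t ∣ n := by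
    rw [← orderOf_coe]
    exact orderOf_dvd_iff_pow_eq_one.mpr (hpow _ t.2)
  have h2 : n ∣ orderOf t := by
    refine Nat.lcm_dvd ?_ ?_
    · have := orderOf_dvd_of_mem_zpowers (ht ⟨x, hx⟩)
      rwa [orderOf_mk] at this
    · have := orderOf_dvd_of_mem_zpowers (ht ⟨y, hy⟩)
      rwa [orderOf_mk] at this
  rw [← hcard, Nat.dvd_antisymm h1 h2]

theorem card_sup_mul_card_inf' {G : Type*} [CommGroup G] [Finite G] (A B : Subgroup G) :
    Nat.card ↥(A ⊔ B) * Nat.card ↥(A ⊓ B) = Nat.card A * Nat.card B := by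
  have h1 : B.relIndex (A ⊔ B) = B.relIndex A := Subgroup.relIndex_sup_right A B
  have h2 : (B.subgroupOf (A ⊔ B)).index * Nat.card (B.subgroupOf (A ⊔ B)) = Nat.card ↥(A ⊔ B) :=
    Subgroup.index_mul_card _
  have h3 : Nat.card (B.subgroupOf (A ⊔ B)) = Nat.card B :=
    Nat.card_congr (Subgroup.subgroupOfEquivOfLe (le_sup_right : B ≤ A ⊔ B)).toEquiv
  have h4 : (B.subgroupOf A).index * Nat.card (B.subgroupOf A) = Nat.card A :=
    Subgroup.index_mul_card _
  have h5 : Nat.card (B.subgroupOf A) = Nat.card ↥(A ⊓ B) := by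
    rw [show B.subgroupOf A = (A ⊓ B).subgroupOf A by rw [inf_comm, Subgroup.inf_subgroupOf_right]]
    exact Nat.card_congr (Subgroup.subgroupOfEquivOfLe (inf_le_left : A ⊓ B ≤ A)).toEquiv
  calc Nat.card ↥(A ⊔ B) * Nat.card ↥(A ⊓ B)
      = (B.subgroupOf (A ⊔ B)).index * Nat.card B * Nat.card ↥(A ⊓ B) := by rw [← h3, h2]
    _ = (B.subgroupOf A).index * Nat.card ↥(A ⊓ B) * Nat.card B := by
        rw [show (B.subgroupOf (A ⊔ B)).index = (B.subgroupOf A).index from h1]; ring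
    _ = Nat.card A * Nat.card B := by rw [← h5, h4]

theorem gcd_lcm_dvd' (a b c : ℕ) (ha : a ≠ 0) (hb : b ≠ 0) (hc : c ≠ 0) :
    Nat.gcd (Nat.lcm a b) c ∣ Nat.lcm (Nat.gcd a c) (Nat.gcd b c) := by
  have hl : Nat.lcm a b ≠ 0 := Nat.lcm_ne_zero ha hb
  have hg : Nat.gcd (Nat.lcm a b) c ≠ 0 := Nat.gcd_ne_zero_right hc
  have hgac : Nat.gcd a c ≠ 0 := Nat.gcd_ne_zero_right hc
  have hgbc : Nat.gcd b c ≠ 0 := Nat.gcd_ne_zero_right hc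
  have hr : Nat.lcm (Nat.gcd a c) (Nat.gcd b c) ≠ 0 := Nat.lcm_ne_zero hgac hgbc
  rw [← Nat.factorization_le_iff_dvd hg hr]
  intro p
  simp only [Nat.factorization_gcd hl hc, Nat.factorization_lcm ha hb,
    Nat.factorization_lcm hgac hgbc, Nat.factorization_gcd ha hc, Nat.factorization_gcd hb hc,
    Finsupp.inf_apply, Finsupp.sup_apply]
  omega

theorem key' {G : Type*} [CommGroup G] [Finite G] (x y z : G)
    (hxy : IsCyclic ↥(Subgroup.closure ({x, y} : Set G)))
    (hxz : IsCyclic ↥(Subgroup.closure ({x, z} : Set G)))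
    (hyz : IsCyclic ↥(Subgroup.closure ({y, z} : Set G))) :
    IsCyclic ↥(Subgroup.closure ({x, y, z} : Set G)) := by
  set a := orderOf x with hadef
  set b := orderOf y with hbdef
  set c := orderOf z with hcdef
  have ha : a ≠ 0 := (orderOf_pos x).ne'
  have hb : b ≠ 0 := (orderOf_pos y).ne'
  have hc : c ≠ 0 := (orderOf_pos z).ne'
  set W := Subgroup.closure ({x, y} : Set G) with hWdef
  set Z := Subgroup.zpowers z with hZdef
  set H := Subgroup.closure ({x, y, z} : Set G) with hHdef
  have hWZ : H = W ⊔ Z := by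
    rw [hHdef, show ({x, y, z} : Set G) = {x, y} ∪ {z} by ext g; simp; tauto,
      Subgroup.closure_union, hZdef, Subgroup.zpowers_eq_closure]
  have cardW : Nat.card W = Nat.lcm a b := card_closure_pair' hxy
  have cardZ : Nat.card Z = c := Nat.card_zpowers z
  -- card of intersections with Z
  have cardA1 : Nat.card ↥(Subgroup.zpowers x ⊓ Z) = Nat.gcd a c := by
    have hsup : Subgroup.zpowers x ⊔ Z = Subgroup.closure ({x, z} : Set G) := by
      rw [show ({x, z} : Set G) = {x} ∪ {z} by ext g; simp; tauto, Subgroup.closure_union,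
        hZdef, Subgroup.zpowers_eq_closure, Subgroup.zpowers_eq_closure]
    have h := card_sup_mul_card_inf' (Subgroup.zpowers x) Z
    rw [hsup, card_closure_pair' hxz, Nat.card_zpowers, Nat.card_zpowers] at h
    have h2 := Nat.gcd_mul_lcm a c
    have hlcm : Nat.lcm a c ≠ 0 := Nat.lcm_ne_zero ha hc
    apply Nat.eq_of_mul_eq_mul_left (Nat.pos_of_ne_zero hlcm)
    rw [← hadef, ← hcdef] at h
    rw [h, Nat.mul_comm (Nat.lcm a c) (Nat.gcd a c), h2]
  have cardA2 : Nat.card ↥(Subgroup.zpowers y ⊓ Z) = Nat.gcd b c := by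
    have hsup : Subgroup.zpowers y ⊔ Z = Subgroup.closure ({y, z} : Set G) := by
      rw [show ({y, z} : Set G) = {y} ∪ {z} by ext g; simp; tauto, Subgroup.closure_union,
        hZdef, Subgroup.zpowers_eq_closure, Subgroup.zpowers_eq_closure]
    have h := card_sup_mul_card_inf' (Subgroup.zpowers y) Z
    rw [hsup, card_closure_pair' hyz, Nat.card_zpowers, Nat.card_zpowers] at h
    have h2 := Nat.gcd_mul_lcm b c
    have hlcm : Nat.lcm b c ≠ 0 := Nat.lcm_ne_zero hb hc
    apply Nat.eq_of_mul_eq_mul_left (Nat.pos_of_ne_zero hlcm)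
    rw [← hbdef, ← hcdef] at h
    rw [h, Nat.mul_comm (Nat.lcm b c) (Nat.gcd b c), h2]
  set m := Nat.card ↥(W ⊓ Z) with hmdef
  have hmpos : 0 < m := Nat.card_pos
  have hA1le : Subgroup.zpowers x ⊓ Z ≤ W ⊓ Z :=
    inf_le_inf_right Z (Subgroup.zpowers_le.mpr (Subgroup.subset_closure (by simp)))
  have hA2le : Subgroup.zpowers y ⊓ Z ≤ W ⊓ Z :=
    inf_le_inf_right Z (Subgroup.zpowers_le.mpr (Subgroup.subset_closure (by simp)))
  have hdvd1 : Nat.gcd a c ∣ m := cardA1 ▸ Subgroup.card_dvd_of_le hA1le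
  have hdvd2 : Nat.gcd b c ∣ m := cardA2 ▸ Subgroup.card_dvd_of_le hA2le
  have hgdvd : Nat.gcd (Nat.lcm a b) c ∣ m :=
    (gcd_lcm_dvd' a b c ha hb hc).trans (Nat.lcm_dvd hdvd1 hdvd2)
  have hgle : Nat.gcd (Nat.lcm a b) c ≤ m := Nat.le_of_dvd hmpos hgdvd
  -- card H
  have cardH : Nat.card H * m = Nat.lcm a b * c := by
    have h := card_sup_mul_card_inf' W Z
    rw [← hWZ, cardW, cardZ] at h
    exact h
  set n := Nat.lcm (Nat.lcm a b) c with hndef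
  have hn0 : n ≠ 0 := Nat.lcm_ne_zero (Nat.lcm_ne_zero ha hb) hc
  have hgl : Nat.gcd (Nat.lcm a b) c * n = Nat.lcm a b * c := Nat.gcd_mul_lcm _ _
  have hcardle : Nat.card H ≤ n := by
    have h1 : Nat.card H * m ≤ n * m := by
      rw [cardH, ← hgl]
      calc Nat.gcd (Nat.lcm a b) c * n ≤ m * n := Nat.mul_le_mul_right n hgle
        _ = n * m := Nat.mul_comm m n
    exact Nat.le_of_mul_le_mul_right h1 hmpos
  -- exponent
  have hxH : x ∈ H := Subgroup.subset_closure (by simp)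
  have hyH : y ∈ H := Subgroup.subset_closure (by simp)
  have hzH : z ∈ H := Subgroup.subset_closure (by simp)
  have hadvd : a ∣ Monoid.exponent ↥H := by
    have := Monoid.order_dvd_exponent (⟨x, hxH⟩ : H)
    rwa [Subgroup.orderOf_mk] at this
  have hbdvd : b ∣ Monoid.exponent ↥H := by
    have := Monoid.order_dvd_exponent (⟨y, hyH⟩ : H)
    rwa [Subgroup.orderOf_mk] at this
  have hcdvd : c ∣ Monoid.exponent ↥H := by
    have := Monoid.order_dvd_exponent (⟨z, hzH⟩ : H)
    rwa [Subgroup.orderOf_mk] at this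
  have hnexp : n ∣ Monoid.exponent ↥H := Nat.lcm_dvd (Nat.lcm_dvd hadvd hbdvd) hcdvd
  have hexpcard : Monoid.exponent ↥H ∣ Nat.card ↥H := Group.exponent_dvd_nat_card
  have hncard : n ∣ Nat.card ↥H := hnexp.trans hexpcard
  have hcardeq : Nat.card ↥H = n :=
    Nat.le_antisymm hcardle (Nat.le_of_dvd Nat.card_pos hncard)
  have hfinal : Monoid.exponent ↥H = Nat.card ↥H :=
    Nat.dvd_antisymm hexpcard (hcardeq ▸ hnexp)
  exact IsCyclic.of_exponent_eq_card hfinal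

theorem cyclic_of_pairwise_cyclic (G : Type*) [Group G] [Finite G] (x y z : G)
    (hxy : IsCyclic ↥(Subgroup.closure {x, y}))
    (hxz : IsCyclic ↥(Subgroup.closure {x, z}))
    (hyz : IsCyclic ↥(Subgroup.closure {y, z})) :
    IsCyclic ↥(Subgroup.closure {x, y, z}) := by
  have hcxy := commute_of_cyclic' hxy
  have hcxz := commute_of_cyclic' hxz
  have hcyz := commute_of_cyclic' hyz
  have hcomm : ∀ a ∈ ({x, y, z} : Set G), ∀ b ∈ ({x, y, z} : Set G), a * b = b * a := by
    intro a ha b hb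
    simp only [Set.mem_insert_iff, Set.mem_singleton_iff] at ha hb
    rcases ha with rfl | rfl | rfl <;> rcases hb with rfl | rfl | rfl <;>
      first
        | rfl
        | exact hcxy
        | exact hcxy.symm
        | exact hcxz
        | exact hcxz.symm
        | exact hcyz
        | exact hcyz.symm
  letI : CommGroup ↥(Subgroup.closure ({x, y, z} : Set G)) :=
    Subgroup.closureCommGroupOfComm hcomm
  set C := Subgroup.closure ({x, y, z} : Set G) with hC
  have hxC : x ∈ C := Subgroup.subset_closure (by simp)
  have hyC : y ∈ C := Subgroup.subset_closure (by simp)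
  have hzC : z ∈ C := Subgroup.subset_closure (by simp)
  have htrans : ∀ u v : ↥C, IsCyclic ↥(Subgroup.closure ({(u : G), (v : G)} : Set G)) →
      IsCyclic ↥(Subgroup.closure ({u, v} : Set ↥C)) := by
    intro u v h
    have himg : (C.subtype '' ({u, v} : Set ↥C)) = {(u : G), (v : G)} := by
      rw [Set.image_pair]
      simp [Subgroup.coe_subtype]
    have hmap : (Subgroup.closure ({u, v} : Set ↥C)).map C.subtype =
        Subgroup.closure ({(u : G), (v : G)} : Set G) := by
      rw [MonoidHom.map_closure, himg]
    have e := Subgroup.equivMapOfInjective (Subgroup.closure ({u, v} : Set ↥C)) C.subtype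
      C.subtype_injective
    rw [hmap] at e
    haveI := h
    exact isCyclic_of_surjective e.symm.toMonoidHom e.symm.surjective
  letI I : CommGroup ↥C := Subgroup.closureCommGroupOfComm hcomm
  have h1 : IsCyclic ↥(@Subgroup.closure (↥C) I.toGroup {⟨x, hxC⟩, ⟨y, hyC⟩}) :=
    htrans ⟨x, hxC⟩ ⟨y, hyC⟩ hxy
  have h2 : IsCyclic ↥(@Subgroup.closure (↥C) I.toGroup {⟨x, hxC⟩, ⟨z, hzC⟩}) :=
    htrans ⟨x, hxC⟩ ⟨z, hzC⟩ hxz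
  have h3 : IsCyclic ↥(@Subgroup.closure (↥C) I.toGroup {⟨y, hyC⟩, ⟨z, hzC⟩}) :=
    htrans ⟨y, hyC⟩ ⟨z, hzC⟩ hyz
  have hkey := @key' (↥C) I inferInstance ⟨x, hxC⟩ ⟨y, hyC⟩ ⟨z, hzC⟩ h1 h2 h3
  have hkey' : IsCyclic ↥(Subgroup.closure ({⟨x, hxC⟩, ⟨y, hyC⟩, ⟨z, hzC⟩} : Set ↥C)) := hkey
  have htop : Subgroup.closure ({⟨x, hxC⟩, ⟨y, hyC⟩, ⟨z, hzC⟩} : Set ↥C) = ⊤ := by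
    apply Subgroup.map_injective C.subtype_injective
    rw [MonoidHom.map_closure, ← MonoidHom.range_eq_map, Subgroup.range_subtype]
    have himg : (C.subtype '' ({⟨x, hxC⟩, ⟨y, hyC⟩, ⟨z, hzC⟩} : Set ↥C)) = {x, y, z} := by
      rw [Set.image_insert_eq, Set.image_pair]
      simp [Subgroup.coe_subtype]
    rw [himg]
  rw [htop] at hkey'
  haveI := hkey'
  exact isCyclic_of_surjective Subgroup.topEquiv.toMonoidHom Subgroup.topEquiv.surjective
end

section
/- The cycliciser Cyc(G) = { c ∈ G : ⟨c,g⟩ is cyclic for all g ∈ G } is a cyclic normal subgroup of G. -/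
private lemma isCyclic_of_le' {G : Type*} [Group G] {H K : Subgroup G} (h : H ≤ K)
    (hK : IsCyclic K) : IsCyclic H := by
  haveI := hK
  haveI : IsCyclic (H.subgroupOf K) := Subgroup.isCyclic _
  exact isCyclic_of_surjective (Subgroup.subgroupOfEquivOfLe h)
    (Subgroup.subgroupOfEquivOfLe h).surjective

private lemma gen_of_cyclic {G : Type*} [Group G] (H : Subgroup G) (hH : IsCyclic H) :
    ∃ x : G, x ∈ H ∧ H ≤ Subgroup.zpowers x := by
  obtain ⟨x, hx⟩ := hH.exists_generator
  refine ⟨(x : G), x.2, fun y hy => ?_⟩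
  obtain ⟨k, hk⟩ := hx ⟨y, hy⟩
  exact ⟨k, congrArg Subtype.val hk⟩

theorem cycliciser_is_cyclic_normal_subgroup (G : Type*) [Group G] [Finite G] :
    ∃ N : Subgroup G,
      (N : Set G) = {c : G | ∀ g : G, IsCyclic ↥(Subgroup.closure {c, g})} ∧
      N.Normal ∧ IsCyclic ↥N := by
  set S : Set G := {c : G | ∀ g : G, IsCyclic ↥(Subgroup.closure {c, g})} with hS
  -- elements of S are central
  have hcomm : ∀ c ∈ S, ∀ g : G, c * g = g * c := by
    intro c hc g
    haveI := hc g
    letI : CommGroup ↥(Subgroup.closure {c, g}) := IsCyclic.commGroup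
    have hcm : c ∈ Subgroup.closure {c, g} :=
      Subgroup.subset_closure (Set.mem_insert _ _)
    have hgm : g ∈ Subgroup.closure {c, g} :=
      Subgroup.subset_closure (Set.mem_insert_of_mem _ rfl)
    have : (⟨c, hcm⟩ : ↥(Subgroup.closure {c, g})) * ⟨g, hgm⟩ = ⟨g, hgm⟩ * ⟨c, hcm⟩ :=
      mul_comm _ _
    exact congrArg Subtype.val this
  have one_mem'' : (1 : G) ∈ S := by
    intro g
    have hle : Subgroup.closure {(1 : G), g} ≤ Subgroup.zpowers g := by
      rw [Subgroup.closure_le]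
      rintro x (rfl | rfl)
      · exact Subgroup.one_mem _
      · exact Subgroup.mem_zpowers _
    haveI : IsCyclic ↥(Subgroup.zpowers g) :=
      ⟨⟨⟨g, Subgroup.mem_zpowers g⟩, fun z => by
        obtain ⟨k, hk⟩ := z.2
        exact ⟨k, Subtype.ext hk⟩⟩⟩
    exact isCyclic_of_le' hle this
  have inv_mem'' : ∀ c ∈ S, c⁻¹ ∈ S := by
    intro c hc g
    have hle : Subgroup.closure {c⁻¹, g} ≤ Subgroup.closure {c, g} := by
      rw [Subgroup.closure_le]
      rintro x (rfl | rfl)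
      · exact Subgroup.inv_mem _ (Subgroup.subset_closure (Set.mem_insert _ _))
      · exact Subgroup.subset_closure (Set.mem_insert_of_mem _ rfl)
    exact isCyclic_of_le' hle (hc g)
  have mul_mem'' : ∀ c ∈ S, ∀ d ∈ S, c * d ∈ S := by
    intro c hc d hd g
    obtain ⟨x, hxm, hxle⟩ := gen_of_cyclic _ (hc g)
    have hle : Subgroup.closure {c * d, g} ≤ Subgroup.closure {d, x} := by
      have hxin : x ∈ Subgroup.closure {d, x} :=
        Subgroup.subset_closure (Set.mem_insert_of_mem _ rfl)
      have hdin : d ∈ Subgroup.closure {d, x} :=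
        Subgroup.subset_closure (Set.mem_insert _ _)
      have hcin : c ∈ Subgroup.closure {d, x} := by
        obtain ⟨k, hk⟩ := hxle (Subgroup.subset_closure (Set.mem_insert _ _))
        exact hk ▸ Subgroup.zpow_mem _ hxin k
      have hgin : g ∈ Subgroup.closure {d, x} := by
        obtain ⟨k, hk⟩ := hxle (Subgroup.subset_closure (Set.mem_insert_of_mem _ rfl))
        exact hk ▸ Subgroup.zpow_mem _ hxin k
      rw [Subgroup.closure_le]
      rintro y (rfl | rfl)
      · exact Subgroup.mul_mem _ hcin hdin
      · exact hgin
    exact isCyclic_of_le' hle (hd x)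
  let N : Subgroup G :=
    { carrier := S
      one_mem' := one_mem''
      inv_mem' := fun hc => inv_mem'' _ hc
      mul_mem' := fun hc hd => mul_mem'' _ hc _ hd }
  refine ⟨N, rfl, ?_, ?_⟩
  · constructor
    intro n hn g
    have : g * n * g⁻¹ = n := by
      rw [← hcomm n hn g]
      group
    rw [this]
    exact hn
  · haveI : Nonempty ↥N := ⟨⟨1, one_mem''⟩⟩
    obtain ⟨m, hm⟩ := Finite.exists_max (fun x : ↥N => orderOf x)
    refine ⟨⟨m, fun c => ?_⟩⟩
    have hmS : (m : G) ∈ S := m.2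
    obtain ⟨y, hym, hyle⟩ := gen_of_cyclic _ (hmS (c : G))
    have hyN : y ∈ N := by
      have hle : Subgroup.closure {(m : G), (c : G)} ≤ N := by
        rw [Subgroup.closure_le]
        rintro z (rfl | rfl)
        · exact m.2
        · exact c.2
      exact hle hym
    have hmy : (m : G) ∈ Subgroup.zpowers y :=
      hyle (Subgroup.subset_closure (Set.mem_insert _ _))
    have hcy : (c : G) ∈ Subgroup.zpowers y :=
      hyle (Subgroup.subset_closure (Set.mem_insert_of_mem _ rfl))
    have hdvd : orderOf (m : G) ∣ orderOf y := orderOf_dvd_of_mem_zpowers hmy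
    have hle' : orderOf y ≤ orderOf (m : G) := by
      have := hm ⟨y, hyN⟩
      simpa [Subgroup.orderOf_coe] using this
    have hord : orderOf y = orderOf (m : G) :=
      le_antisymm hle' (Nat.le_of_dvd (orderOf_pos _) hdvd)
    have hzle : Subgroup.zpowers (m : G) ≤ Subgroup.zpowers y := by
      obtain ⟨k, hk⟩ := hmy
      intro z hz
      obtain ⟨l, hl⟩ := hz
      exact hl ▸ hk ▸ Subgroup.zpow_mem _ (Subgroup.zpow_mem _ (Subgroup.mem_zpowers y) k) l
    have hzeq : Subgroup.zpowers (m : G) = Subgroup.zpowers y := by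
      apply Subgroup.eq_of_le_of_card_ge hzle
      rw [Nat.card_zpowers, Nat.card_zpowers, hord]
    rw [← hzeq] at hcy
    obtain ⟨k, hk⟩ := hcy
    exact ⟨k, Subtype.ext hk⟩
end

section
/- The quotient G/Cyc(G) has trivial cycliciser, i.e., Cyc(G/Cyc(G)) = 1. -/
lemma isCyclic_zpowers {G : Type*} [Group G] (y : G) : IsCyclic ↥(Subgroup.zpowers y) := by
  refine ⟨⟨⟨y, Subgroup.mem_zpowers y⟩, fun x => ?_⟩⟩
  obtain ⟨n, hn⟩ := x.2
  exact ⟨n, Subtype.ext (by simpa using hn)⟩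

/-- From a cyclic subgroup, extract a generator in the ambient group. -/
lemma exists_le_zpowers {G : Type*} [Group G] {H : Subgroup G} (h : IsCyclic H) :
    ∃ y : G, y ∈ H ∧ H ≤ Subgroup.zpowers y := by
  obtain ⟨g, hg⟩ := h.exists_generator
  refine ⟨(g : G), g.2, fun x hx => ?_⟩
  obtain ⟨n, hn⟩ := hg ⟨x, hx⟩
  exact ⟨n, by simpa using congrArg (Subtype.val) hn⟩

lemma aux_list {G : Type*} [Group G] (N : Subgroup G)
    (hN : ∀ c : G, c ∈ N → ∀ g : G, IsCyclic ↥(Subgroup.closure {c, g})) :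
    ∀ (l : List G), (∀ s ∈ l, s ∈ N) → ∀ x : G,
      ∃ y : G, x ∈ Subgroup.zpowers y ∧ ∀ s ∈ l, s ∈ Subgroup.zpowers y := by
  intro l
  induction l with
  | nil => exact fun _ x => ⟨x, Subgroup.mem_zpowers x, by simp⟩
  | cons s l ih =>
    intro hl x
    obtain ⟨y, hxy, hly⟩ := ih (fun t ht => hl t (List.mem_cons_of_mem s ht)) x
    have hcyc := hN s (hl s List.mem_cons_self) y
    obtain ⟨z, hzmem, hz⟩ := exists_le_zpowers hcyc
    have hs : s ∈ Subgroup.zpowers z :=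
      hz (Subgroup.subset_closure (by simp))
    have hy : y ∈ Subgroup.zpowers z :=
      hz (Subgroup.subset_closure (by simp))
    have hyz : Subgroup.zpowers y ≤ Subgroup.zpowers z := by
      rwa [Subgroup.zpowers_le]
    refine ⟨z, hyz hxy, fun t ht => ?_⟩
    rcases List.mem_cons.mp ht with rfl | ht
    · exact hs
    · exact hyz (hly t ht)

theorem cycliciser_of_quotient_by_cycliciser_trivial (G : Type*) [Group G] [Finite G]
    (N : Subgroup G) [N.Normal]
    (hN : ∀ c : G, c ∈ N ↔ ∀ g : G, IsCyclic ↥(Subgroup.closure {c, g})) :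
    ∀ c : G ⧸ N, (∀ g : G ⧸ N, IsCyclic ↥(Subgroup.closure {c, g})) → c = 1 := by
  intro c hc
  induction c using QuotientGroup.induction_on with
  | H c =>
  rw [QuotientGroup.eq_one_iff]
  rw [hN]
  intro g
  -- the subgroup generated by the images is cyclic
  have hcyc := hc (QuotientGroup.mk g)
  obtain ⟨xq, hxqmem, hxq⟩ := exists_le_zpowers hcyc
  obtain ⟨x, rfl⟩ := QuotientGroup.mk_surjective xq
  have hcmem : (QuotientGroup.mk c : G ⧸ N) ∈ Subgroup.zpowers (QuotientGroup.mk x : G ⧸ N) :=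
    hxq (Subgroup.subset_closure (by simp))
  have hgmem : (QuotientGroup.mk g : G ⧸ N) ∈ Subgroup.zpowers (QuotientGroup.mk x : G ⧸ N) :=
    hxq (Subgroup.subset_closure (by simp))
  obtain ⟨i, hi⟩ := hcmem
  obtain ⟨j, hj⟩ := hgmem
  have hk1 : (x ^ i)⁻¹ * c ∈ N := by
    rw [← QuotientGroup.eq]
    simpa using hi
  have hk2 : (x ^ j)⁻¹ * g ∈ N := by
    rw [← QuotientGroup.eq]
    simpa using hj
  obtain ⟨y, hxy, hly⟩ := aux_list N (fun a ha => (hN a).mp ha)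
    [(x ^ i)⁻¹ * c, (x ^ j)⁻¹ * g] (by simp [hk1, hk2]) x
  have hcy : c ∈ Subgroup.zpowers y := by
    have h1 : (x ^ i)⁻¹ * c ∈ Subgroup.zpowers y := hly _ (by simp)
    have : x ^ i * ((x ^ i)⁻¹ * c) ∈ Subgroup.zpowers y :=
      mul_mem (zpow_mem hxy i) h1
    simpa using this
  have hgy : g ∈ Subgroup.zpowers y := by
    have h1 : (x ^ j)⁻¹ * g ∈ Subgroup.zpowers y := hly _ (by simp)
    have : x ^ j * ((x ^ j)⁻¹ * g) ∈ Subgroup.zpowers y :=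
      mul_mem (zpow_mem hxy j) h1
    simpa using this
  have hle : Subgroup.closure {c, g} ≤ Subgroup.zpowers y := by
    rw [Subgroup.closure_le]
    intro t ht
    rcases ht with rfl | ht
    · exact hcy
    · simpa using (Set.mem_singleton_iff.mp ht ▸ hgy)
  have := isCyclic_zpowers y
  exact Subgroup.isCyclic_of_le hle
end

section
/- If G is a finite group with d(G) ≥ 2, then d(G/Cyc(G)) = d(G). -/
noncomputable def dG (G : Type*) [Group G] : ℕ :=
  sInf {n | ∃ s : Finset G, s.card = n ∧ Subgroup.closure (s : Set G) = ⊤}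

def Flexible (G : Type*) [Group G] (k : ℕ) : Prop :=
  ∀ x : Fin k → G, dG ↥(Subgroup.closure (Set.range x)) = k →
    ∃ y : Fin (dG G - k) → G, Subgroup.closure (Set.range x ∪ Set.range y) = ⊤

open Subgroup

lemma dG_le' {G : Type*} [Group G] (s : Finset G)
    (hs : Subgroup.closure (s : Set G) = ⊤) : dG G ≤ s.card :=
  Nat.sInf_le ⟨s, rfl, hs⟩

lemma exists_gen (G : Type*) [Group G] [Finite G] :
    ∃ s : Finset G, s.card = dG G ∧ Subgroup.closure (s : Set G) = ⊤ := by
  cases nonempty_fintype G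
  have hne : {n | ∃ s : Finset G, s.card = n ∧ Subgroup.closure (s : Set G) = ⊤}.Nonempty :=
    ⟨(Finset.univ : Finset G).card, Finset.univ, rfl, by simp⟩
  obtain ⟨s, hcard, hcl⟩ := Nat.sInf_mem hne
  exact ⟨s, hcard, hcl⟩

lemma core_lemma {G : Type*} [Group G] (N : Subgroup G)
    (hN : ∀ c : G, c ∈ N → ∀ g : G, IsCyclic ↥(Subgroup.closure {c, g}))
    (s : Finset G) (hs : (s : Set G) ⊆ (N : Set G)) (g : G) :
    ∃ z : G, g ∈ zpowers z ∧ ∀ c ∈ s, c ∈ zpowers z := by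
  classical
  induction s using Finset.induction_on with
  | empty => exact ⟨g, mem_zpowers g, by simp⟩
  | @insert c s hc ih =>
    have hcs : (s : Set G) ⊆ (N : Set G) := by
      intro x hx; exact hs (by simpa using Or.inr hx)
    obtain ⟨z, hg, hz⟩ := ih hcs
    have hcN : c ∈ N := hs (by simp)
    obtain ⟨w, hw⟩ := (hN c hcN z).exists_generator
    have hcK : c ∈ Subgroup.closure ({c, z} : Set G) := subset_closure (by simp)
    have hzK : z ∈ Subgroup.closure ({c, z} : Set G) := subset_closure (by simp)
    have hcw : c ∈ zpowers (w : G) := by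
      obtain ⟨n, hn⟩ := hw ⟨c, hcK⟩
      exact ⟨n, by simpa using congrArg Subtype.val hn⟩
    have hzw : z ∈ zpowers (w : G) := by
      obtain ⟨n, hn⟩ := hw ⟨z, hzK⟩
      exact ⟨n, by simpa using congrArg Subtype.val hn⟩
    have hle : zpowers z ≤ zpowers (w : G) := zpowers_le.mpr hzw
    refine ⟨(w : G), hle hg, ?_⟩
    intro c' hc'
    rcases Finset.mem_insert.mp hc' with h | h
    · exact h ▸ hcw
    · exact hle (hz c' h)

theorem dG_quotient_cycliciser (G : Type*) [Group G] [Finite G]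
    (N : Subgroup G) [N.Normal]
    (hN : ∀ c : G, c ∈ N ↔ ∀ g : G, IsCyclic ↥(Subgroup.closure {c, g}))
    (hd : 2 ≤ dG G) :
    dG (G ⧸ N) = dG G := by
  classical
  have hN' : ∀ c : G, c ∈ N → ∀ g : G, IsCyclic ↥(Subgroup.closure {c, g}) :=
    fun c hc => (hN c).mp hc
  set φ := QuotientGroup.mk' N with hφ
  have hφs : Function.Surjective φ := QuotientGroup.mk'_surjective N
  refine le_antisymm ?_ ?_
  · -- dG (G ⧸ N) ≤ dG G
    obtain ⟨s, hcard, hcl⟩ := exists_gen G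
    have : Subgroup.closure ((s.image φ : Finset (G ⧸ N)) : Set (G ⧸ N)) = ⊤ := by
      rw [Finset.coe_image, ← MonoidHom.map_closure, hcl]
      exact Subgroup.map_top_of_surjective φ hφs
    calc dG (G ⧸ N) ≤ (s.image φ).card := dG_le' _ this
      _ ≤ s.card := Finset.card_image_le
      _ = dG G := hcard
  · -- dG G ≤ dG (G ⧸ N)
    obtain ⟨s, hcard, hcl⟩ := exists_gen (G ⧸ N)
    rcases Finset.eq_empty_or_nonempty s with rfl | ⟨a, ha⟩
    · -- G ⧸ N trivial: G = N, G is cyclic: contradiction with hd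
      exfalso
      have hmem : ∀ g : G, g ∈ N := by
        intro g
        have h1 : φ g ∈ Subgroup.closure (∅ : Set (G ⧸ N)) := by
          rw [show Subgroup.closure (∅ : Set (G ⧸ N)) = ⊤ by simpa using hcl]
          trivial
        rw [Subgroup.closure_empty, Subgroup.mem_bot] at h1
        exact (QuotientGroup.eq_one_iff g).mp h1
      obtain ⟨z, _, hz⟩ := core_lemma N hN' (Set.toFinite (N : Set G)).toFinset
        (by simp) 1
      have htop : Subgroup.closure ({z} : Set G) = ⊤ := by
        rw [eq_top_iff]
        intro g _
        have : g ∈ zpowers z := hz g (by simp [hmem g])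
        simpa [Subgroup.zpowers_eq_closure] using this
      have : dG G ≤ 1 := by
        have := dG_le' ({z} : Finset G) (by simpa using htop)
        simpa using this
      omega
    · -- lift generators
      obtain ⟨f, hf⟩ : ∃ f : G ⧸ N → G, ∀ x, φ (f x) = x :=
        ⟨Function.surjInv hφs, Function.surjInv_eq hφs⟩
      have hfinj : Function.Injective f :=
        Function.LeftInverse.injective (g := φ) hf
      set S : Finset G := s.image f with hS
      have hSim : φ '' (S : Set G) = (s : Set (G ⧸ N)) := by
        rw [hS, Finset.coe_image, ← Set.image_comp]
        simp [Function.comp, hf]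
      -- every g decomposes as element of closure S times element of N
      have hdec : ∀ g : G, ∃ h ∈ Subgroup.closure (S : Set G), h⁻¹ * g ∈ N := by
        intro g
        have : φ g ∈ Subgroup.closure ((s : Set (G ⧸ N))) := by rw [hcl]; trivial
        rw [← hSim, ← MonoidHom.map_closure] at this
        obtain ⟨h, hh, hhg⟩ := this
        refine ⟨h, hh, ?_⟩
        have : φ (h⁻¹ * g) = 1 := by
          simp only [map_mul, map_inv, hhg]
          group
        exact (QuotientGroup.eq_one_iff _).mp this
      obtain ⟨z, hg1, hz⟩ := core_lemma N hN' (Set.toFinite (N : Set G)).toFinset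
        (by simp) (f a)
      set T : Finset G := insert z (S.erase (f a)) with hT
      have hzT : z ∈ Subgroup.closure (T : Set G) := subset_closure (by simp [hT])
      have hzpow : zpowers z ≤ Subgroup.closure (T : Set G) := zpowers_le.mpr hzT
      have hNT : ∀ n : G, n ∈ N → n ∈ Subgroup.closure (T : Set G) := by
        intro n hn
        exact hzpow (hz n (by simp [hn]))
      have hST : (S : Set G) ⊆ (Subgroup.closure (T : Set G) : Set G) := by
        intro x hx
        by_cases hxa : x = f a
        · exact hxa ▸ hzpow hg1
        · exact subset_closure (by simp [hT, Finset.mem_erase, hxa, hx,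
            Finset.mem_coe.mp hx])
      have hTtop : Subgroup.closure (T : Set G) = ⊤ := by
        rw [eq_top_iff]
        intro g _
        obtain ⟨h, hh, hn⟩ := hdec g
        have hhT : h ∈ Subgroup.closure (T : Set G) :=
          (Subgroup.closure_le _).mpr hST hh
        have : g = h * (h⁻¹ * g) := by group
        rw [this]
        exact mul_mem hhT (hNT _ hn)
      have hfaS : f a ∈ S := Finset.mem_image_of_mem f ha
      have hcardT : T.card ≤ s.card := by
        calc T.card ≤ (S.erase (f a)).card + 1 := Finset.card_insert_le _ _
          _ = S.card - 1 + 1 := by rw [Finset.card_erase_of_mem hfaS]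
          _ ≤ S.card := by
              have : 1 ≤ S.card := Finset.card_pos.mpr ⟨f a, hfaS⟩
              omega
          _ ≤ s.card := Finset.card_image_le
      calc dG G ≤ T.card := dG_le' _ hTtop
        _ ≤ s.card := hcardT
        _ = dG (G ⧸ N) := hcard
end

section
/- Let G be a finite group, 1 ≤ k ≤ d(G), and suppose G is k-flexible. If N is a normal subgroup of G with d(G/N) = d(G), then G/N is k-flexible. -/
lemma dG_set_nonempty (G : Type*) [Group G] [Finite G] :
    {n | ∃ s : Finset G, s.card = n ∧ Subgroup.closure (s : Set G) = ⊤}.Nonempty := by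
  have : Fintype G := Fintype.ofFinite G
  exact ⟨(Finset.univ : Finset G).card, Finset.univ, rfl, by
    simp [Subgroup.closure_univ]⟩

lemma dG_le_of_surjective {G H : Type*} [Group G] [Group H] [Finite G]
    (f : G →* H) (hf : Function.Surjective f) : dG H ≤ dG G := by
  classical
  obtain ⟨s, hcard, htop⟩ := Nat.sInf_mem (dG_set_nonempty G)
  have h1 : Subgroup.closure ((s.image f : Finset H) : Set H) = ⊤ := by
    rw [Finset.coe_image, ← MonoidHom.map_closure, htop]
    exact Subgroup.map_top_of_surjective f hf
  calc dG H ≤ (s.image f).card := Nat.sInf_le ⟨s.image f, rfl, h1⟩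
    _ ≤ s.card := Finset.card_image_le
    _ = dG G := hcard

lemma dG_closure_range_eq {G : Type*} [Group G] [Finite G] {k : ℕ} (x : Fin k → G)
    {H : Type*} [Group H] (f : G →* H)
    (hk : dG ↥(Subgroup.closure (Set.range (f ∘ x))) = k) :
    dG ↥(Subgroup.closure (Set.range x)) = k := by
  classical
  set K := Subgroup.closure (Set.range x) with hK
  -- upper bound
  have hle : dG ↥K ≤ k := by
    set x' : Fin k → ↥K := fun i => ⟨x i, Subgroup.subset_closure (Set.mem_range_self i)⟩
    have htop : Subgroup.closure (Set.range x') = ⊤ := by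
      rw [eq_top_iff, ← Subgroup.closure_closure_coe_preimage (k := Set.range x)]
      apply Subgroup.closure_mono
      rintro ⟨g, hg⟩ ⟨i, rfl⟩
      exact ⟨i, rfl⟩
    have hcoe : ((Finset.univ.image x' : Finset ↥K) : Set ↥K) = Set.range x' := by
      simp [Set.image_univ]
    calc dG ↥K ≤ (Finset.univ.image x').card :=
          Nat.sInf_le ⟨Finset.univ.image x', rfl, by rw [hcoe]; exact htop⟩
      _ ≤ (Finset.univ : Finset (Fin k)).card := Finset.card_image_le
      _ = k := by simp
  -- lower bound
  have hmap : K.map f = Subgroup.closure (Set.range (f ∘ x)) := by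
    rw [hK, MonoidHom.map_closure, ← Set.range_comp]
  have hge : k ≤ dG ↥K := by
    have := dG_le_of_surjective (f.subgroupMap K) (f.subgroupMap_surjective K)
    rw [show K.map f = Subgroup.closure (Set.range (f ∘ x)) from hmap] at this
    omega
  omega

theorem flexible_quotient (G : Type*) [Group G] [Finite G] (k : ℕ)
    (hk1 : 1 ≤ k) (hk2 : k ≤ dG G) (hG : Flexible G k)
    (N : Subgroup G) [N.Normal] (hd : dG (G ⧸ N) = dG G) :
    Flexible (G ⧸ N) k := by
  intro x hx
  set f := QuotientGroup.mk' N with hf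
  have hfsurj : Function.Surjective f := QuotientGroup.mk'_surjective N
  set x' : Fin k → G := fun i => Function.surjInv hfsurj (x i) with hx'
  have hcomp : f ∘ x' = x := by
    funext i
    exact Function.surjInv_eq hfsurj (x i)
  have hdx' : dG ↥(Subgroup.closure (Set.range x')) = k := by
    apply dG_closure_range_eq x' f
    rw [hcomp]; exact hx
  obtain ⟨y, hy⟩ := hG x' hdx'
  refine ⟨fun i => f (y (Fin.cast (by rw [hd]) i)), ?_⟩
  have himg : Set.range x ∪ Set.range (fun i : Fin (dG (G ⧸ N) - k) =>
      f (y (Fin.cast (by rw [hd]) i))) = f '' (Set.range x' ∪ Set.range y) := by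
    rw [Set.image_union, ← Set.range_comp, hcomp]
    congr 1
    ext g
    constructor
    · rintro ⟨i, rfl⟩; exact ⟨y (Fin.cast (by rw [hd]) i), ⟨_, rfl⟩, rfl⟩
    · rintro ⟨_, ⟨i, rfl⟩, rfl⟩; exact ⟨Fin.cast (by rw [hd]) i, by simp⟩
  rw [himg, ← MonoidHom.map_closure, hy]
  exact Subgroup.map_top_of_surjective f hfsurj
end

section
/- The quaternion group Q₈ is 2-flexible but not 1-flexible. -/
namespace QFlexAux

open Subgroup QuaternionGroup

abbrev Q := QuaternionGroup 2

lemma pow_mem_zpowers {G : Type*} [Group G] {g h : G} (k : ℕ) (hk : g ^ k = h) :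
    h ∈ zpowers g := hk ▸ pow_mem (mem_zpowers g) k

lemma top1 {H : Subgroup Q} (h1 : a 1 ∈ H) {i : ZMod 4} (h2 : xa i ∈ H) : H = ⊤ := by
  rw [eq_top_iff']
  have ha : ∀ j : ZMod 4, a j ∈ H := by
    intro j
    fin_cases j
    · exact pow_mem h1 0
    · exact pow_mem h1 1
    · exact pow_mem h1 2
    · exact pow_mem h1 3
  intro g
  cases g with
  | a j => exact ha j
  | xa j =>
    have h := mul_mem h2 (ha (j - i))
    rw [xa_mul_a] at h
    have e : i + (j - i) = j := by ring
    rwa [e] at h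

lemma top3 {H : Subgroup Q} (h3 : a 3 ∈ H) {i : ZMod 4} (h2 : xa i ∈ H) : H = ⊤ := by
  apply top1 _ h2
  have := pow_mem h3 3
  rwa [show (a 3 : Q) ^ 3 = a 1 from by decide] at this

lemma top_xa_xa {i j : ZMod 4} (h : j - i = 1 ∨ j - i = 3) :
    closure {(xa i : Q), xa j} = ⊤ := by
  have h2 : (xa i : Q) ∈ closure {(xa i : Q), xa j} := subset_closure (Set.mem_insert _ _)
  have hm : (a ((2 : ℕ) + j - i) : Q) ∈ closure {(xa i : Q), xa j} := by
    have := mul_mem h2 (subset_closure (Set.mem_insert_of_mem _ rfl))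
    rwa [xa_mul_xa] at this
  rcases h with h | h
  · have e : ((2 : ℕ) : ZMod 4) + j - i = 3 := by rw [add_sub_assoc, h]; decide
    exact top3 (e ▸ hm) h2
  · have e : ((2 : ℕ) : ZMod 4) + j - i = 1 := by rw [add_sub_assoc, h]; decide
    exact top1 (e ▸ hm) h2

lemma tri (x0 x1 : Q) :
    x1 ∈ zpowers x0 ∨ x0 ∈ zpowers x1 ∨ closure {x0, x1} = ⊤ := by
  obtain (i | i) := x0 <;> obtain (j | j) := x1 <;> fin_cases i <;> fin_cases j <;>
    first
    | exact Or.inl (pow_mem_zpowers 0 (by decide))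
    | exact Or.inl (pow_mem_zpowers 1 (by decide))
    | exact Or.inl (pow_mem_zpowers 2 (by decide))
    | exact Or.inl (pow_mem_zpowers 3 (by decide))
    | exact Or.inl (pow_mem_zpowers 4 (by decide))
    | exact Or.inr (Or.inl (pow_mem_zpowers 2 (by decide)))
    | exact Or.inr (Or.inl (pow_mem_zpowers 4 (by decide)))
    | exact Or.inr (Or.inr (top1 (subset_closure (Set.mem_insert _ _))
        (subset_closure (Set.mem_insert_of_mem _ rfl))))
    | exact Or.inr (Or.inr (top3 (subset_closure (Set.mem_insert _ _))
        (subset_closure (Set.mem_insert_of_mem _ rfl))))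
    | exact Or.inr (Or.inr (top1 (subset_closure (Set.mem_insert_of_mem _ rfl))
        (subset_closure (Set.mem_insert _ _))))
    | exact Or.inr (Or.inr (top3 (subset_closure (Set.mem_insert_of_mem _ rfl))
        (subset_closure (Set.mem_insert _ _))))
    | exact Or.inr (Or.inr (top_xa_xa (by decide)))

lemma closure_pair {G : Type*} [Group G] {g h : G} (hh : h ∈ zpowers g) :
    closure {g, h} = zpowers g := by
  apply le_antisymm
  · rw [closure_le]
    exact Set.insert_subset_iff.mpr ⟨mem_zpowers g, Set.singleton_subset_iff.mpr hh⟩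
  · exact zpowers_le.mpr (subset_closure (Set.mem_insert _ _))

lemma one_mem_dset {G : Type*} [Group G] (g : G) :
    (1 : ℕ) ∈ {n | ∃ s : Finset ↥(zpowers g), s.card = n ∧
      Subgroup.closure (s : Set ↥(zpowers g)) = ⊤} := by
  refine ⟨{⟨g, mem_zpowers g⟩}, Finset.card_singleton _, ?_⟩
  rw [eq_top_iff']
  rintro ⟨h, hh⟩
  obtain ⟨k, rfl⟩ := mem_zpowers_iff.mp hh
  have he : (⟨g, mem_zpowers g⟩ : ↥(zpowers g)) ^ k = ⟨g ^ k, hh⟩ := by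
    ext; simp
  exact he ▸ zpow_mem (subset_closure (by simp)) k

lemma dG_zpowers_le {G : Type*} [Group G] (g : G) : dG ↥(zpowers g) ≤ 1 :=
  Nat.sInf_le (one_mem_dset g)

lemma dG_zpowers_eq_one {G : Type*} [Group G] (g : G) (hg : g ≠ 1) :
    dG ↥(zpowers g) = 1 := by
  refine le_antisymm (dG_zpowers_le g) ?_
  have h0 : dG ↥(zpowers g) ≠ 0 := by
    intro h
    rw [dG, Nat.sInf_eq_zero] at h
    rcases h with h | h
    · obtain ⟨s, hs0, hstop⟩ := h
      rw [Finset.card_eq_zero] at hs0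
      subst hs0
      rw [Finset.coe_empty, Subgroup.closure_empty] at hstop
      have : (⟨g, mem_zpowers g⟩ : ↥(zpowers g)) ∈ (⊥ : Subgroup ↥(zpowers g)) := by
        rw [hstop]; exact mem_top _
      rw [mem_bot] at this
      exact hg (congrArg Subtype.val this)
    · exact absurd h (Set.nonempty_iff_ne_empty.mp ⟨1, one_mem_dset g⟩)
  omega

lemma dQ_le : dG (QuaternionGroup 2) ≤ 2 := by
  apply Nat.sInf_le
  refine ⟨{a 1, xa 0}, by decide, ?_⟩
  apply top1 (i := 0) <;> exact subset_closure (by simp)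

lemma card_Q : Nat.card Q = 8 := by
  rw [Nat.card_eq_fintype_card, QuaternionGroup.card]

lemma zp_ne_top {g : Q} (hg : orderOf g = 4) : zpowers g ≠ ⊤ := by
  intro h
  have h1 : Nat.card ↥(zpowers g) = 4 := by rw [Nat.card_zpowers, hg]
  rw [h, Subgroup.card_top, card_Q] at h1
  omega

lemma a_mem (j : ZMod 4) : (a j : Q) ∈ zpowers (a 1 : Q) := by
  fin_cases j
  · exact pow_mem_zpowers 0 (by decide)
  · exact pow_mem_zpowers 1 (by decide)
  · exact pow_mem_zpowers 2 (by decide)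
  · exact pow_mem_zpowers 3 (by decide)

lemma orderOf_a_one' : orderOf (a 1 : Q) = 4 := by
  rw [QuaternionGroup.orderOf_a_one]

end QFlexAux

open Subgroup QuaternionGroup QFlexAux in
theorem quaternion_two_flexible_not_one_flexible :
    Flexible (QuaternionGroup 2) 2 ∧ ¬ Flexible (QuaternionGroup 2) 1 := by
  constructor
  · intro x hx
    have hr : Set.range x = {x 0, x 1} := by
      ext g
      simp only [Set.mem_range, Set.mem_insert_iff, Set.mem_singleton_iff]
      constructor
      · rintro ⟨i, rfl⟩
        rcases Fin.exists_fin_two.mp ⟨i, rfl⟩ with h | h <;> [left; right] <;> rw [← h]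
      · rintro (rfl | rfl) <;> [exact ⟨0, rfl⟩; exact ⟨1, rfl⟩]
    refine ⟨fun _ => 1, ?_⟩
    suffices h : Subgroup.closure (Set.range x) = ⊤ by
      rw [eq_top_iff]
      exact h ▸ closure_mono Set.subset_union_left
    rw [hr]
    rw [hr] at hx
    rcases tri (x 0) (x 1) with h | h | h
    · rw [closure_pair h] at hx
      have := dG_zpowers_le (x 0)
      omega
    · rw [Set.pair_comm, closure_pair h] at hx
      have := dG_zpowers_le (x 1)
      omega
    · exact h
  · intro hF
    obtain ⟨y, hy⟩ := hF (fun _ => a 2) (by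
      rw [Set.range_const, ← zpowers_eq_closure]
      exact dG_zpowers_eq_one _ (by decide))
    have hm : dG (QuaternionGroup 2) - 1 ≤ 1 := by have := dQ_le; omega
    have key : ∃ w : Q, zpowers w ≠ ⊤ ∧ (a 2 : Q) ∈ zpowers w ∧ ∀ i, y i ∈ zpowers w := by
      rcases Nat.eq_zero_or_pos (dG (QuaternionGroup 2) - 1) with h0 | hpos
      · exact ⟨a 1, zp_ne_top orderOf_a_one', a_mem 2, fun i => absurd i.isLt (by omega)⟩
      · have hall : ∀ i, y i = y ⟨0, hpos⟩ := by
          rintro ⟨iv, hiv⟩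
          have hiv0 : iv = 0 := by omega
          subst hiv0
          rfl
        cases hc : y ⟨0, hpos⟩ with
        | a j =>
          refine ⟨a 1, zp_ne_top orderOf_a_one', a_mem 2, fun i => ?_⟩
          rw [hall i, hc]; exact a_mem j
        | xa j =>
          refine ⟨xa j, zp_ne_top (QuaternionGroup.orderOf_xa j), ?_, fun i => ?_⟩
          · fin_cases j <;> exact pow_mem_zpowers 2 (by decide)
          · rw [hall i, hc]; exact mem_zpowers _
    obtain ⟨w, hwt, hw2, hwy⟩ := key
    apply hwt
    rw [eq_top_iff, ← hy, closure_le]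
    rintro g (⟨i, rfl⟩ | ⟨i, rfl⟩)
    · exact hw2
    · exact hwy i
end

section
/- Let p be prime, r ≥ 2, and let G = (Z/p)^r ⋊ ⟨g⟩ where g ∈ GL_r(p) is a nontrivial scalar matrix. Then d(G) = r + 1. -/
/-- The homomorphism sending an additive automorphism to the corresponding
multiplicative automorphism. -/
def addAutToMulAut (A : Type*) [AddGroup A] : Multiplicative (AddAut A) →* MulAut (Multiplicative A) where
  toFun e := AddEquiv.toMultiplicative e.toAdd
  map_one' := rfl
  map_mul' _ _ := rfl

/-- The action of `⟨g⟩ ≤ GL_r(p)` on `(ℤ/p)^r` by automorphisms. -/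
noncomputable def scalarAction {p r : ℕ} [Fact p.Prime] (g : GL (Fin r) (ZMod p)) :
    Subgroup.zpowers g →* MulAut (Multiplicative (Fin r → ZMod p)) :=
  ((addAutToMulAut (Fin r → ZMod p)).comp
    ((DistribMulAction.toAddAut
        (LinearMap.GeneralLinearGroup (ZMod p) (Fin r → ZMod p)) (Fin r → ZMod p)).comp
      (Matrix.GeneralLinearGroup.toLin.toMonoidHom))).comp (Subgroup.zpowers g).subtype

open Matrix

variable {p r : ℕ} [Fact p.Prime]

abbrev GG (g : GL (Fin r) (ZMod p)) :=
  SemidirectProduct (Multiplicative (Fin r → ZMod p)) (Subgroup.zpowers g) (scalarAction g)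

lemma scalarAction_toAdd (g : GL (Fin r) (ZMod p)) (h : Subgroup.zpowers g)
    (a : Multiplicative (Fin r → ZMod p)) :
    Multiplicative.toAdd (scalarAction g h a)
      = (h.val : Matrix (Fin r) (Fin r) (ZMod p)) *ᵥ Multiplicative.toAdd a := rfl

lemma scalar_mulVec (c : ZMod p) (v : Fin r → ZMod p) :
    (Matrix.scalar (Fin r) c) *ᵥ v = c • v := by
  funext i
  simp [Matrix.scalar_apply, Matrix.mulVec_diagonal]

lemma exists_scalar (hr : 0 < r) (g : GL (Fin r) (ZMod p)) (c : ZMod p)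
    (hgc : (g : Matrix (Fin r) (Fin r) (ZMod p)) = Matrix.scalar (Fin r) c)
    (h : Subgroup.zpowers g) :
    ∃ c' : ZMod p, (h.val : Matrix (Fin r) (Fin r) (ZMod p)) = Matrix.scalar (Fin r) c' := by
  let S : Subgroup (GL (Fin r) (ZMod p)) :=
  { carrier := {x | ∃ c' : ZMod p, IsUnit c' ∧
      (x : Matrix (Fin r) (Fin r) (ZMod p)) = Matrix.scalar (Fin r) c'}
    one_mem' := ⟨1, isUnit_one, by simp⟩
    mul_mem' := by
      rintro a b ⟨c1, hu1, h1⟩ ⟨c2, hu2, h2⟩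
      exact ⟨c1 * c2, hu1.mul hu2, by rw [Units.val_mul, h1, h2, ← _root_.map_mul (Matrix.scalar (Fin r))]⟩
    inv_mem' := by
      rintro x ⟨c', hu, hx⟩
      obtain ⟨u, rfl⟩ := hu
      refine ⟨(↑u⁻¹ : ZMod p), u⁻¹.isUnit, ?_⟩
      calc Units.val (x⁻¹)
          = (Matrix.scalar (Fin r) (↑u⁻¹ : ZMod p) * Matrix.scalar (Fin r) (↑u : ZMod p))
            * Units.val (x⁻¹) := by
            rw [← _root_.map_mul (Matrix.scalar (Fin r)), ← Units.val_mul, inv_mul_cancel,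
              Units.val_one, _root_.map_one (Matrix.scalar (Fin r)), one_mul]
        _ = Matrix.scalar (Fin r) (↑u⁻¹ : ZMod p)
            * (Units.val x * Units.val (x⁻¹)) := by rw [mul_assoc, hx]
        _ = Matrix.scalar (Fin r) (↑u⁻¹ : ZMod p) := by
            rw [← Units.val_mul, mul_inv_cancel, Units.val_one, mul_one] }
  have hcu : IsUnit c := by
    have h1 : Units.val g * Units.val g⁻¹ = 1 := by
      rw [← Units.val_mul, mul_inv_cancel, Units.val_one]
    rw [hgc] at h1
    have h2 := congrFun (congrFun h1 ⟨0, hr⟩) ⟨0, hr⟩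
    rw [Matrix.scalar_apply] at h2
    rw [Matrix.diagonal_mul] at h2
    exact IsUnit.of_mul_eq_one _ (h2.trans (Matrix.one_apply_eq _))
  have hgS : g ∈ S := ⟨c, hcu, hgc⟩
  have hle : Subgroup.zpowers g ≤ S := Subgroup.zpowers_le.mpr hgS
  obtain ⟨c', _, hc'⟩ := hle h.2
  exact ⟨c', hc'⟩

open SemidirectProduct in
lemma UB_gen (g : GL (Fin r) (ZMod p)) (hg1 : g ≠ 1) :
    ∃ s : Finset (GG g), s.card = r + 1 ∧ Subgroup.closure (s : Set (GG g)) = ⊤ := by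
  classical
  set e : Fin r → GG g := fun i => inl (Multiplicative.ofAdd (Pi.single i (1 : ZMod p)))
    with he
  set t : GG g := inr ⟨g, Subgroup.mem_zpowers g⟩ with ht
  refine ⟨(Finset.image e Finset.univ) ∪ {t}, ?_, ?_⟩
  · have hinj : Function.Injective e := by
      intro i j hij
      have h2 := congrFun (congrArg (fun x : GG g => Multiplicative.toAdd x.left) hij) i
      simp only [he, left_inl, toAdd_ofAdd] at h2
      by_contra hne
      simp [Pi.single_apply, hne] at h2
    have hdisj : Disjoint (Finset.image e Finset.univ) ({t} : Finset (GG g)) := by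
      simp only [Finset.disjoint_singleton_right, Finset.mem_image]
      rintro ⟨i, -, hit⟩
      have h2 := congrArg (fun x : GG g => x.right) hit
      simp only [he, ht, right_inl, right_inr] at h2
      exact hg1 (congrArg Subtype.val h2).symm
    rw [Finset.card_union_of_disjoint hdisj, Finset.card_image_of_injective _ hinj,
      Finset.card_univ, Fintype.card_fin, Finset.card_singleton]
  · rw [eq_top_iff]
    rintro x -
    rw [← inl_left_mul_inr_right x]
    refine mul_mem ?_ ?_
    · have hv : x.left = Multiplicative.ofAdd
          (∑ i, ((Multiplicative.toAdd x.left) i).val • Pi.single i (1 : ZMod p)) := by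
        conv_lhs => rw [← ofAdd_toAdd x.left]
        congr 1
        funext j
        rw [Finset.sum_apply]
        have h3 : ∀ i : Fin r, (((Multiplicative.toAdd x.left) i).val •
              (Pi.single i (1 : ZMod p) : Fin r → ZMod p)) j
            = if j = i then Multiplicative.toAdd x.left j else 0 := by
          intro i
          rw [Pi.smul_apply, Pi.single_apply]
          split
          · rename_i h
            rw [h, nsmul_eq_mul, mul_one]
            exact ZMod.natCast_rightInverse _
          · simp
        simp_rw [h3]
        simp
      suffices h : x.left ∈ (Subgroup.closure ↑(Finset.image e Finset.univ ∪ {t})).comap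
          (inl : Multiplicative (Fin r → ZMod p) →* GG g) from h
      rw [hv, ofAdd_sum]
      refine Subgroup.prod_mem _ fun i _ => ?_
      rw [ofAdd_nsmul]
      refine pow_mem (Subgroup.mem_comap.mpr (Subgroup.subset_closure ?_)) _
      simp only [Finset.coe_union, Set.mem_union, Finset.coe_image, Set.mem_image]
      exact Or.inl ⟨i, by simp, rfl⟩
    · obtain ⟨k, hk⟩ := Subgroup.mem_zpowers_iff.mp x.right.2
      have hxr : x.right = (⟨g, Subgroup.mem_zpowers g⟩ : Subgroup.zpowers g) ^ k :=
        Subtype.ext (by rw [SubgroupClass.coe_zpow]; exact hk.symm)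
      rw [hxr, map_zpow]
      exact zpow_mem (Subgroup.subset_closure (by simp [ht])) k

open SemidirectProduct in
lemma LB_gen (hr : 2 ≤ r) (g : GL (Fin r) (ZMod p)) (hg1 : g ≠ 1) (c : ZMod p)
    (hgc : (g : Matrix (Fin r) (Fin r) (ZMod p)) = Matrix.scalar (Fin r) c)
    (s : Finset (GG g)) (hs : Subgroup.closure (s : Set (GG g)) = ⊤) :
    r + 1 ≤ s.card := by
  classical
  have hr0 : 0 < r := by omega
  -- there is a generator with nontrivial right component
  have hex : ∃ x0 ∈ s, x0.right ≠ (1 : Subgroup.zpowers g) := by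
    by_contra hall
    push_neg at hall
    have hle : Subgroup.closure (s : Set (GG g)) ≤ (rightHom :
        GG g →* Subgroup.zpowers g).ker := by
      rw [Subgroup.closure_le]
      intro x hx
      rw [SetLike.mem_coe, MonoidHom.mem_ker, rightHom_eq_right]
      exact hall x hx
    rw [hs, top_le_iff] at hle
    have h2 : rightHom (inr (⟨g, Subgroup.mem_zpowers g⟩ : Subgroup.zpowers g) : GG g) = 1 := by
      rw [← MonoidHom.mem_ker, hle]; trivial
    rw [rightHom_inr] at h2
    exact hg1 (congrArg Subtype.val h2)
  obtain ⟨x0, hx0s, hx0⟩ := hex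
  obtain ⟨c0, hc0⟩ := exists_scalar hr0 g c hgc x0.right
  have hc0ne1 : (1 : ZMod p) - c0 ≠ 0 := by
    intro h
    have hc01 : c0 = 1 := by linear_combination -h
    apply hx0
    apply Subtype.ext
    apply Units.ext
    rw [hc0, hc01, _root_.map_one (Matrix.scalar (Fin r))]
    rfl
  -- conjugate the generating set
  set w : Fin r → ZMod p := (-((1 : ZMod p) - c0)⁻¹) • Multiplicative.toAdd x0.left with hw
  set z : GG g := inl (Multiplicative.ofAdd w) with hz
  set s' : Finset (GG g) := s.image (fun y => z * y * z⁻¹) with hs'def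
  have hs' : Subgroup.closure (s' : Set (GG g)) = ⊤ := by
    have him : (s' : Set (GG g)) = (MulAut.conj z).toMonoidHom '' (s : Set (GG g)) := by
      rw [hs'def, Finset.coe_image]
      rfl
    rw [him, ← MonoidHom.map_closure, hs]
    exact Subgroup.map_top_of_surjective _ (MulEquiv.surjective _)
  set L : GG g → (Fin r → ZMod p) := fun y => Multiplicative.toAdd y.left with hL
  set x0' : GG g := z * x0 * z⁻¹ with hx0'def
  have hx0's : x0' ∈ s' := Finset.mem_image_of_mem _ hx0s
  -- the conjugated distinguished generator has trivial left component
  have hx0' : L x0' = 0 := by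
    have h1 : (z * x0 * z⁻¹).left =
        z.left * (scalarAction g z.right x0.left *
          scalarAction g (z * x0).right z⁻¹.left) := by
      rw [mul_left, mul_left, mul_assoc]
    show Multiplicative.toAdd (z * x0 * z⁻¹).left = 0
    rw [h1]
    have hzr : z.right = 1 := rfl
    have hzl : z.left = Multiplicative.ofAdd w := rfl
    have hzinv : (z⁻¹ : GG g).left = Multiplicative.ofAdd (-w) := by
      rw [hz, ← _root_.map_inv (inl : Multiplicative (Fin r → ZMod p) →* GG g), left_inl]
      rfl
    have hzir : (z * x0).right = x0.right := by rw [mul_right, hzr, one_mul]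
    rw [hzir, hzr, _root_.map_one (scalarAction g), hzl, hzinv]
    rw [toAdd_mul, toAdd_mul]
    show w + (Multiplicative.toAdd x0.left +
      Multiplicative.toAdd (scalarAction g x0.right (Multiplicative.ofAdd (-w)))) = 0
    rw [scalarAction_toAdd, toAdd_ofAdd, hc0, scalar_mulVec]
    rw [hw]
    funext i
    simp only [Pi.add_apply, Pi.smul_apply, Pi.neg_apply, smul_eq_mul, Pi.zero_apply]
    field_simp
    ring
  -- every element of the closure has left component in the span
  set U : Submodule (ZMod p) (Fin r → ZMod p) :=
    Submodule.span (ZMod p) (L '' (s' : Set (GG g))) with hU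
  have hact : ∀ (h : Subgroup.zpowers g) (a : Multiplicative (Fin r → ZMod p)),
      ∃ c' : ZMod p, Multiplicative.toAdd (scalarAction g h a)
        = c' • Multiplicative.toAdd a := by
    intro h a
    obtain ⟨c', hc'⟩ := exists_scalar hr0 g c hgc h
    exact ⟨c', by rw [scalarAction_toAdd, hc', scalar_mulVec]⟩
  set K : Subgroup (GG g) :=
  { carrier := {y | L y ∈ U}
    one_mem' := by simp [hL]
    mul_mem' := by
      intro a b ha hb
      show Multiplicative.toAdd (a * b).left ∈ U
      rw [mul_left, toAdd_mul]
      obtain ⟨c', hc'⟩ := hact a.right b.left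
      rw [hc']
      exact U.add_mem ha (U.smul_mem _ hb)
    inv_mem' := by
      intro a ha
      show Multiplicative.toAdd (a⁻¹ : GG g).left ∈ U
      rw [inv_left]
      obtain ⟨c', hc'⟩ := hact a.right⁻¹ a.left⁻¹
      rw [hc', toAdd_inv]
      exact U.smul_mem _ (U.neg_mem ha) } with hK
  have hKtop : Subgroup.closure (s' : Set (GG g)) ≤ K :=
    (Subgroup.closure_le K).mpr (fun y hy => Submodule.subset_span ⟨y, hy, rfl⟩)
  rw [hs', top_le_iff] at hKtop
  have hUtop : U = ⊤ := by
    rw [eq_top_iff]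
    intro v _
    have h2 : (inl (Multiplicative.ofAdd v) : GG g) ∈ K := by rw [hKtop]; trivial
    exact h2
  -- rank bound
  set T : Finset (Fin r → ZMod p) := (s'.erase x0').image L with hT
  have hspanT : Submodule.span (ZMod p) (T : Set (Fin r → ZMod p)) = ⊤ := by
    rw [eq_top_iff, ← hUtop, hU]
    have himg : L '' (s' : Set (GG g)) ⊆ insert 0 (T : Set (Fin r → ZMod p)) := by
      rintro u ⟨y, hy, rfl⟩
      by_cases hyx : y = x0'
      · left; rw [hyx, hx0']
      · right
        rw [hT, Finset.coe_image]
        exact ⟨y, Finset.mem_coe.mpr (Finset.mem_erase.mpr ⟨hyx, hy⟩), rfl⟩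
    calc Submodule.span (ZMod p) (L '' (s' : Set (GG g)))
        ≤ Submodule.span (ZMod p) (insert 0 (T : Set (Fin r → ZMod p))) :=
          Submodule.span_mono himg
      _ = Submodule.span (ZMod p) (T : Set (Fin r → ZMod p)) := Submodule.span_insert_zero
  have hrT : r ≤ T.card := by
    have h1 : Module.finrank (ZMod p) (Fin r → ZMod p) ≤ T.card := by
      rw [← finrank_top (ZMod p) (Fin r → ZMod p), ← hspanT]
      exact finrank_span_finset_le_card T
    rwa [Module.finrank_pi, Fintype.card_fin] at h1
  have hTle : T.card ≤ s.card - 1 := by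
    calc T.card ≤ (s'.erase x0').card := Finset.card_image_le
      _ = s'.card - 1 := Finset.card_erase_of_mem hx0's
      _ ≤ s.card - 1 := by
          have h5 : s'.card ≤ s.card := hs'def ▸ Finset.card_image_le
          omega
  have hs1 : 1 ≤ s.card := Finset.card_pos.mpr ⟨x0, hx0s⟩
  omega

theorem dG_affine_scalar_group (p r : ℕ) [Fact p.Prime] (hr : 2 ≤ r)
    (g : GL (Fin r) (ZMod p)) (hg1 : g ≠ 1)
    (hg : ∃ c : ZMod p, (g : Matrix (Fin r) (Fin r) (ZMod p)) = Matrix.scalar (Fin r) c) :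
    dG (SemidirectProduct (Multiplicative (Fin r → ZMod p)) (Subgroup.zpowers g)
      (scalarAction g)) = r + 1 := by
  obtain ⟨c, hgc⟩ := hg
  obtain ⟨s, hscard, hsgen⟩ := UB_gen g hg1
  have hmem : r + 1 ∈ {n | ∃ t : Finset (GG g), t.card = n ∧
      Subgroup.closure (t : Set (GG g)) = ⊤} := ⟨s, hscard, hsgen⟩
  unfold dG
  refine le_antisymm (Nat.sInf_le hmem) (le_csInf ⟨r + 1, hmem⟩ ?_)
  rintro n ⟨t, htcard, htgen⟩
  exact htcard ▸ LB_gen hr g hg1 c hgc t htgen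
end

section
/- Let G be a finite group with d(G) ≥ 2 and suppose Cyc(G) ≠ 1 and G is 2-flexible. Then G is not 1-flexible. -/
lemma dG_closure_singleton {G : Type*} [Group G] {c : G} (hc : c ≠ 1) :
    dG ↥(Subgroup.closure ({c} : Set G)) = 1 := by
  have hmem : c ∈ Subgroup.closure ({c} : Set G) := Subgroup.subset_closure rfl
  set c' : ↥(Subgroup.closure ({c} : Set G)) := ⟨c, hmem⟩
  have h1 : (1 : ℕ) ∈ {n | ∃ s : Finset ↥(Subgroup.closure ({c} : Set G)),
      s.card = n ∧ Subgroup.closure (s : Set ↥(Subgroup.closure ({c} : Set G))) = ⊤} := by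
    refine ⟨{c'}, Finset.card_singleton _, ?_⟩
    rw [Finset.coe_singleton]
    rw [eq_top_iff]
    rintro ⟨x, hx⟩ -
    rw [Subgroup.mem_closure_singleton] at hx ⊢
    obtain ⟨n, hn⟩ := hx
    exact ⟨n, by ext; simpa using hn⟩
  have h0 : (0 : ℕ) ∉ {n | ∃ s : Finset ↥(Subgroup.closure ({c} : Set G)),
      s.card = n ∧ Subgroup.closure (s : Set ↥(Subgroup.closure ({c} : Set G))) = ⊤} := by
    rintro ⟨s, hs, htop⟩
    rw [Finset.card_eq_zero] at hs
    subst hs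
    simp only [Finset.coe_empty, Subgroup.closure_empty] at htop
    have : c' ∈ (⊥ : Subgroup ↥(Subgroup.closure ({c} : Set G))) := htop ▸ Subgroup.mem_top c'
    rw [Subgroup.mem_bot] at this
    exact hc (by simpa [c', Subtype.ext_iff] using this)
  have hle : dG ↥(Subgroup.closure ({c} : Set G)) ≤ 1 := Nat.sInf_le h1
  have hne0 : dG ↥(Subgroup.closure ({c} : Set G)) ≠ 0 := by
    intro h
    rcases Nat.sInf_eq_zero.mp h with h' | h'
    · exact h0 h'
    · exact absurd h1 (h' ▸ Set.notMem_empty 1)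
  omega

theorem not_one_flexible_of_cycliciser_nontrivial (G : Type*) [Group G] [Finite G]
    (hd : 2 ≤ dG G)
    (N : Subgroup G) [N.Normal]
    (hN : ∀ c : G, c ∈ N ↔ ∀ g : G, IsCyclic ↥(Subgroup.closure {c, g}))
    (hne : N ≠ ⊥) (h2 : Flexible G 2) :
    ¬ Flexible G 1 := by
  classical
  intro h1
  obtain ⟨⟨c, hcN⟩, hc1⟩ := Subgroup.ne_bot_iff_exists_ne_one.mp hne
  have hc : c ≠ 1 := by simpa [Subtype.ext_iff] using hc1
  obtain ⟨y, hy⟩ := h1 (fun _ => c) (by rw [Set.range_const]; exact dG_closure_singleton hc)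
  have hd1 : 0 < dG G - 1 := by omega
  set y0 := y ⟨0, hd1⟩ with hy0
  have hcyc : IsCyclic ↥(Subgroup.closure ({c, y0} : Set G)) := (hN c).mp hcN y0
  obtain ⟨g, hg⟩ := hcyc.exists_generator
  set z := (g : G) with hz
  have hpairz : ∀ w : G, w ∈ Subgroup.closure ({c, y0} : Set G) → w ∈ Subgroup.zpowers z := by
    intro w hw
    obtain ⟨n, hn⟩ := (Subgroup.mem_zpowers_iff).mp (hg ⟨w, hw⟩)
    exact ⟨n, by simpa [hz, Subtype.ext_iff] using hn⟩
  have hcz : c ∈ Subgroup.zpowers z :=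
    hpairz c (Subgroup.subset_closure (by simp))
  have hy0z : y0 ∈ Subgroup.zpowers z :=
    hpairz y0 (Subgroup.subset_closure (by simp))
  set s : Finset G := insert z ((Finset.univ.image y).erase y0) with hs
  -- closure s = ⊤
  have hzs : z ∈ Subgroup.closure (s : Set G) :=
    Subgroup.subset_closure (by simp [hs])
  have hzpow : Subgroup.zpowers z ≤ Subgroup.closure (s : Set G) :=
    Subgroup.zpowers_le.mpr hzs
  have hstop : Subgroup.closure (s : Set G) = ⊤ := by
    rw [eq_top_iff, ← hy]
    rw [Subgroup.closure_le]
    rintro w (hw | ⟨i, rfl⟩)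
    · rw [Set.range_const] at hw
      rcases hw with rfl
      exact hzpow hcz
    · by_cases hi : y i = y0
      · rw [hi]; exact hzpow hy0z
      · refine Subgroup.subset_closure ?_
        simp only [hs, Finset.coe_insert, Set.mem_insert_iff, Finset.mem_coe,
          Finset.mem_erase]
        exact Or.inr ⟨hi, Finset.mem_image_of_mem y (Finset.mem_univ i)⟩
  have hy0mem : y0 ∈ Finset.univ.image y :=
    Finset.mem_image_of_mem y (Finset.mem_univ _)
  have himgpos : 1 ≤ (Finset.univ.image y).card := Finset.card_pos.mpr ⟨y0, hy0mem⟩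
  have himgle : (Finset.univ.image y).card ≤ dG G - 1 := by
    calc (Finset.univ.image y).card ≤ (Finset.univ : Finset (Fin (dG G - 1))).card :=
          Finset.card_image_le
      _ = dG G - 1 := by simp
  have hscard : s.card ≤ dG G - 1 := by
    have h1' : s.card ≤ ((Finset.univ.image y).erase y0).card + 1 := Finset.card_insert_le _ _
    have h2' : ((Finset.univ.image y).erase y0).card = (Finset.univ.image y).card - 1 :=
      Finset.card_erase_of_mem hy0mem
    omega
  have hdle : dG G ≤ s.card := Nat.sInf_le ⟨s, rfl, hstop⟩
  omega
end
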